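/- If R₀ = β(0)/(μ+ν) ≤ 1, then any nonnegative solution of I' ≤ I(β(0)(1−I) − (μ+ν)) with I(0) ∈ [0,1] satisfies I(t) → 0 as t → ∞. -/

import Mathlib

open Filter Topology

/-- If `R₀ = β(0)/(μ+ν) ≤ 1`, any nonnegative solution of the
differential inequality `I' ≤ I(β(0)(1−I) − (μ+ν))` with `I(0) ∈ [0,1]`
satisfies `I(t) → 0` as `t → ∞`. -/
theorem prevalence_tendsto_zero_of_R0_le_one
    (μ ν β0 : ℝ) (hμ : 0 < μ) (hν : 0 < ν) (hβ0 : 0 < β0)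
    (I : ℝ → ℝ) (I' : ℝ → ℝ)
    (hderiv : ∀ t, 0 ≤ t → HasDerivAt I (I' t) t)
    (hineq : ∀ t, 0 ≤ t → I' t ≤ I t * (β0 * (1 - I t) - (μ + ν)))
    (hrange : ∀ t, 0 ≤ t → I t ∈ Set.Icc (0:ℝ) 1)
    (hI0 : I 0 ∈ Set.Icc (0:ℝ) 1)
    (hR0 : β0 / (μ + ν) ≤ 1) :
    Tendsto I atTop (𝓝 0) := by
  have hμν : 0 < μ + ν := by linarith
  have hβle : β0 ≤ μ + ν := by
    have := (div_le_one hμν).mp hR0; linarith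
  -- I is antitone on [0, ∞)
  have hmono : AntitoneOn I (Set.Ici (0:ℝ)) := by
    apply antitoneOn_of_deriv_nonpos (convex_Ici 0)
    · exact fun t ht => ((hderiv t ht).continuousAt).continuousWithinAt
    · intro t ht
      rw [interior_Ici] at ht
      exact ((hderiv t ht.le).differentiableAt).differentiableWithinAt
    · intro t ht
      rw [interior_Ici] at ht
      rw [(hderiv t ht.le).deriv]
      have h1 := hineq t ht.le
      have h2 := hrange t ht.le
      nlinarith [mul_nonneg (sub_nonneg.mpr hβle) h2.1, mul_nonneg hβ0.le (sq_nonneg (I t))]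
  rw [Metric.tendsto_atTop]
  intro ε hε
  -- First find T ≥ 0 with I T < ε
  have hT : ∃ T : ℝ, 0 ≤ T ∧ I T < ε := by
    by_contra h
    push_neg at h
    -- then I t ≥ ε for all t ≥ 0, and I' t ≤ -β0 ε²
    have hd : ∀ t ∈ Set.Ici (0:ℝ), I' t + β0 * ε ^ 2 ≤ 0 := by
      intro t ht
      have h1 := hineq t ht
      have h2 := hrange t ht
      have h3 := h t ht
      nlinarith [mul_nonneg (sub_nonneg.mpr hβle) h2.1,
        mul_nonneg (mul_nonneg hβ0.le (sub_nonneg.mpr h3)) (by linarith [h2.1] : (0:ℝ) ≤ I t + ε)]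
    have hf : AntitoneOn (fun t => I t + β0 * ε ^ 2 * t) (Set.Ici (0:ℝ)) := by
      apply antitoneOn_of_deriv_nonpos (convex_Ici 0)
      · exact fun t ht =>
          (((hderiv t ht).add (((hasDerivAt_id t).const_mul (β0 * ε ^ 2)))).continuousAt).continuousWithinAt
      · intro t ht
        rw [interior_Ici] at ht
        exact (((hderiv t ht.le).add ((hasDerivAt_id t).const_mul (β0 * ε ^ 2))).differentiableAt).differentiableWithinAt
      · intro t ht
        rw [interior_Ici] at ht
        have heq := ((hderiv t ht.le).add ((hasDerivAt_id t).const_mul (β0 * ε ^ 2))).deriv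
        simp only [id] at heq
        rw [show (fun t => I t + β0 * ε ^ 2 * t) = (I + fun y => β0 * ε ^ 2 * y) from rfl, heq]
        have := hd t (Set.mem_Ici.mpr (le_of_lt ht))
        linarith
    set t0 : ℝ := 2 / (β0 * ε ^ 2) with ht0
    have ht0pos : 0 < t0 := by positivity
    have := hf (Set.self_mem_Ici) (Set.mem_Ici.mpr ht0pos.le) ht0pos.le
    simp only [mul_zero, add_zero] at this
    have ht0eq : β0 * ε ^ 2 * t0 = 2 := by
      rw [ht0]; field_simp [hβ0.ne', hε.ne']
    have h3 := h t0 ht0pos.le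
    have hI0le := hI0.2
    linarith [this, ht0eq ▸ this]
  obtain ⟨T, hT0, hTε⟩ := hT
  refine ⟨T, fun t ht => ?_⟩
  have h1 : I t ≤ I T := hmono (Set.mem_Ici.mpr hT0) (Set.mem_Ici.mpr (hT0.trans ht)) ht
  have h2 : 0 ≤ I t := (hrange t (hT0.trans ht)).1
  rw [Real.dist_eq, sub_zero, abs_of_nonneg h2]
  linarith
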